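/- Let A be an associative F-algebra graded by an abelian group G, r : G → G → Fˣ a bicharacter, and [x,y] = x*y − r(|y|,|x|) • y*x for homogeneous x, y. Then the following are equivalent: (a) for all homogeneous x, y: (r(|y|,|x|) − r(|x|,|y|)⁻¹) • (y * x) = 0; (b) for all homogeneous x, y: (r(|y|,|x|) − r(|x|,|y|)⁻¹) • [y,x] = 0. -/

import Mathlib

/-- Corollary 1.5 ((ii) ⟺ (iii)) in the `G`-graded setting:
`(r(|y|,|x|) − r(|x|,|y|)⁻¹) • (y*x) = 0` for all homogeneous `x, y` iff
`(r(|y|,|x|) − r(|x|,|y|)⁻¹) • [y,x] = 0` for all homogeneous `x, y`,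
where `[x,y] = x*y − r(|y|,|x|) • y*x`. -/
theorem mC_eq_mCinv_iff_brC_eq_brCinv {F G A : Type*} [Field F] [AddCommGroup G]
    [Ring A] [Algebra F A]
    (r : G → G → Fˣ)
    (hr1 : ∀ g h k, r (g + h) k = r g k * r h k)
    (hr2 : ∀ g h k, r g (h + k) = r g h * r g k)
    (𝒜 : G → Submodule F A)
    (hmul : ∀ g h : G, ∀ x ∈ 𝒜 g, ∀ y ∈ 𝒜 h, x * y ∈ 𝒜 (g + h)) :
    (∀ (gx gy : G) (x y : A), x ∈ 𝒜 gx → y ∈ 𝒜 gy →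
        (((r gy gx : Fˣ) : F) - (((r gx gy)⁻¹ : Fˣ) : F)) • (y * x) = 0) ↔
    (∀ (gx gy : G) (x y : A), x ∈ 𝒜 gx → y ∈ 𝒜 gy →
        (((r gy gx : Fˣ) : F) - (((r gx gy)⁻¹ : Fˣ) : F)) •
          (y * x - ((r gx gy : Fˣ) : F) • (x * y)) = 0) := by
  constructor
  · intro h gx gy x y hx hy
    have h1 := h gx gy x y hx hy
    have h2 := h gy gx y x hy hx
    set a : F := ((r gx gy : Fˣ) : F) with ha'
    set b : F := ((r gy gx : Fˣ) : F) with hb'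
    have ha : a ≠ 0 := Units.ne_zero _
    have hb : b ≠ 0 := Units.ne_zero _
    have hainv : (((r gx gy)⁻¹ : Fˣ) : F) = a⁻¹ := Units.val_inv_eq_inv_val _
    have hbinv : (((r gy gx)⁻¹ : Fˣ) : F) = b⁻¹ := Units.val_inv_eq_inv_val _
    rw [hainv] at h1 ⊢
    rw [hbinv] at h2
    rw [smul_sub, smul_smul, h1, zero_sub, neg_eq_zero]
    have key : (b - a⁻¹) * a = b * (a - b⁻¹) := by field_simp
    rw [key, ← smul_smul, h2, smul_zero]
  · intro h gx gy x y hx hy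
    have h1 := h gx gy x y hx hy
    have h2 := h gy gx y x hy hx
    set a : F := ((r gx gy : Fˣ) : F) with ha'
    set b : F := ((r gy gx : Fˣ) : F) with hb'
    have ha : a ≠ 0 := Units.ne_zero _
    have hb : b ≠ 0 := Units.ne_zero _
    have hainv : (((r gx gy)⁻¹ : Fˣ) : F) = a⁻¹ := Units.val_inv_eq_inv_val _
    have hbinv : (((r gy gx)⁻¹ : Fˣ) : F) = b⁻¹ := Units.val_inv_eq_inv_val _
    rw [hainv] at h1 ⊢
    rw [hbinv] at h2
    rw [smul_sub, smul_smul, sub_eq_zero] at h1 h2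
    by_cases hd : a * b - 1 = 0
    · have hc : b - a⁻¹ = 0 := by
        have hab : a * b = 1 := by linear_combination hd
        field_simp
        linear_combination hab
      rw [hc, zero_smul]
    · -- e1 : (b - a⁻¹) • (y*x) = (a*b-1) • (x*y)
      have e1 : (b - a⁻¹) • (y * x) = (a * b - 1) • (x * y) := by
        rw [h1]
        congr 1
        field_simp
      -- from h2 scaled by b : (b*(a-b⁻¹)) • (x*y) = (b*(a-b⁻¹)*b) • (y*x)
      have e2 : (a * b - 1) • (x * y) = ((a * b - 1) * b) • (y * x) := by
        have := congrArg (fun z => b • z) h2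
        simp only [smul_smul] at this
        calc (a * b - 1) • (x * y) = (b * (a - b⁻¹)) • (x * y) := by
              congr 1; first | (field_simp; ring) | field_simp | ring
          _ = (b * ((a - b⁻¹) * b)) • (y * x) := this
          _ = ((a * b - 1) * b) • (y * x) := by
              congr 1; first | (field_simp; ring) | field_simp | ring
      have e3 : ((b - a⁻¹) - (a * b - 1) * b) • (y * x) = 0 := by
        rw [sub_smul, e1, e2, sub_self]
      have hcoef : (b - a⁻¹) - (a * b - 1) * b = -(a⁻¹ * (a * b - 1) ^ 2) := by
        field_simp; ring
      rw [hcoef, neg_smul, neg_eq_zero, smul_eq_zero] at e3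
      rcases e3 with hc | hyx
      · exfalso
        field_simp at hc
        exact hd ((pow_eq_zero_iff two_ne_zero).mp (by rw [hc, mul_zero]))
      · rw [hyx, smul_zero]
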